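/- Let M be a lattice in M_ℝ and let σ^∨ ⊆ M_ℝ be a rational polyhedral cone. Let P ⊆ M_ℝ be a rational convex polyhedron whose recession cone is σ^∨ (e.g. P = σ^∨ + m₀ for a rational point m₀, or a finite union/intersection of such translates with recession cone σ^∨). Then the set of lattice points P ∩ M is a finitely generated module over the monoid σ^∨ ∩ M; that is, there exist finitely many m₁, …, m_s ∈ P ∩ M such that P ∩ M = ⋃_{i=1}^s ((σ^∨ ∩ M) + m_i). -/

import Mathlib

/-- The convex cone generated by a set of vectors. -/
def coneSpan {V : Type*} [AddCommGroup V] [Module ℝ V] (S : Set V) : Set V :=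
  { x | ∃ (t : Finset V) (c : V → ℝ), ↑t ⊆ S ∧ (∀ v, 0 ≤ c v) ∧ x = ∑ v ∈ t, c v • v }

/-- Dickson's lemma, in the form: every subset of `ι → ℕ` has a finite dominating
subset of minimal elements. -/
theorem dickson_aux {ι : Type} [Finite ι] (A : Set (ι → ℕ)) :
    ∃ B : Set (ι → ℕ), B ⊆ A ∧ B.Finite ∧ ∀ a ∈ A, ∃ b ∈ B, b ≤ a := by
  classical
  set M : Set (ι → ℕ) := {a | a ∈ A ∧ ∀ b ∈ A, b ≤ a → b = a} with hM
  refine ⟨M, fun a ha => ha.1, ?_, ?_⟩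
  · have hanti : IsAntichain (· ≤ ·) M := by
      intro a ha b hb hne hle
      exact hne (hb.2 a ha.1 hle)
    have hpwo : M.IsPWO := Set.isPWO_of_wellQuasiOrderedLE M
    exact hanti.finite_of_partiallyWellOrderedOn hpwo
  · intro a ha
    have hwf : A.WellFoundedOn (· < ·) := (Set.isPWO_of_wellQuasiOrderedLE A).isWF
    refine hwf.induction (P := fun y => ∃ b ∈ M, b ≤ y) ha ?_
    intro y hy ih
    by_cases hmin : ∀ b ∈ A, b ≤ y → b = y
    · exact ⟨y, ⟨hy, hmin⟩, le_rfl⟩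
    · push_neg at hmin
      obtain ⟨b, hbA, hble, hbne⟩ := hmin
      obtain ⟨m, hmM, hmle⟩ := ih b hbA (lt_of_le_of_ne hble hbne)
      exact ⟨m, hmM, hmle.trans hble⟩

/-- Let `M` be a lattice in `M_ℝ`, `σ^∨` a rational polyhedral cone (generated by
the finite set `S` of lattice vectors), and `P` a rational convex polyhedron (cut
out by finitely many rational affine halfspaces) whose recession cone is `σ^∨`.
Then `P ∩ M` is a finitely generated module over the monoid `σ^∨ ∩ M`: there are
finitely many `m₁, …, m_s ∈ P ∩ M` with `P ∩ M = ⋃ᵢ ((σ^∨ ∩ M) + mᵢ)`. -/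
theorem stmt13 (E : Type*) [NormedAddCommGroup E] [NormedSpace ℝ E] [FiniteDimensional ℝ E]
    (L : Submodule ℤ E) [DiscreteTopology L] [IsZLattice ℝ L]
    (S : Finset E) (hS : ↑S ⊆ (L : Set E))
    (ι : Type) [Fintype ι] (f : ι → Module.Dual ℝ E) (c : ι → ℝ)
    (hf : ∀ i, ∀ x ∈ L, ∃ k : ℤ, f i x = (k : ℝ))
    (hc : ∀ i, ∃ q : ℚ, c i = (q : ℝ))
    (P : Set E) (hP : P = { x | ∀ i, c i ≤ f i x })
    (hrec : { v : E | ∀ x ∈ P, ∀ t : ℝ, 0 ≤ t → x + t • v ∈ P } = coneSpan (S : Set E)) :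
    ∃ s : Finset E, ↑s ⊆ P ∩ (L : Set E) ∧
      P ∩ (L : Set E)
        = ⋃ m ∈ s, (fun x => x + m) '' (coneSpan (S : Set E) ∩ (L : Set E)) := by
  classical
  by_cases hPne : P.Nonempty
  swap
  · -- `P` is empty
    refine ⟨∅, by simp, ?_⟩
    rw [Set.not_nonempty_iff_eq_empty] at hPne
    simp [hPne]
  obtain ⟨x₀, hx₀⟩ := hPne
  -- the cone is cut out by the inequalities `f i ≥ 0`
  have hcone : ∀ v : E, v ∈ coneSpan (S : Set E) ↔ ∀ i, 0 ≤ f i v := by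
    intro v
    rw [← hrec]
    constructor
    · intro hv i
      by_contra hneg
      push_neg at hneg
      set t : ℝ := (f i x₀ - c i + 1) / (-(f i v)) with ht
      have htnn : 0 ≤ t := by
        apply div_nonneg
        · have := hP ▸ hx₀; have := this i; linarith
        · linarith
      have hmem := hv x₀ hx₀ t htnn
      rw [hP] at hmem
      have h2 := hmem i
      rw [map_add, map_smul, smul_eq_mul] at h2
      have hne : f i v ≠ 0 := by linarith
      have h3 : t * f i v = -(f i x₀ - c i + 1) := by
        have hne2 : -(f i v) ≠ 0 := by linarith
        rw [ht, div_mul_eq_mul_div, div_eq_iff hne2]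
        ring
      linarith
    · intro hv x hx t htnn
      rw [hP] at hx ⊢
      intro i
      have := hx i
      rw [map_add, map_smul, smul_eq_mul]
      have : 0 ≤ t * f i v := mul_nonneg htnn (hv i)
      linarith [hx i]
  -- integer value of `f i` on a lattice point
  have hval : ∀ m ∈ P ∩ (L : Set E), ∀ i, ∃ n : ℕ, f i m = ((n : ℤ) + ⌈c i⌉ : ℤ) := by
    intro m hm i
    obtain ⟨k, hk⟩ := hf i m hm.2
    have hci : c i ≤ f i m := (hP ▸ hm.1) i
    have hkc : ⌈c i⌉ ≤ k := by
      rw [Int.ceil_le]; rw [← hk]; exact hci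
    refine ⟨(k - ⌈c i⌉).toNat, ?_⟩
    rw [hk]
    norm_cast
    omega
  -- the set of value vectors
  set A : Set (ι → ℕ) :=
    {g | ∃ m ∈ P ∩ (L : Set E), ∀ i, f i m = ((g i : ℤ) + ⌈c i⌉ : ℤ)} with hA
  obtain ⟨B, hBA, hBfin, hBdom⟩ := dickson_aux A
  -- choose a witness for each element of `B`
  have hwit : ∀ b ∈ B, ∃ m ∈ P ∩ (L : Set E), ∀ i, f i m = ((b i : ℤ) + ⌈c i⌉ : ℤ) :=
    fun b hb => hBA hb
  set φ : (ι → ℕ) → E := fun b =>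
    if h : b ∈ B then (hwit b h).choose else 0 with hφ
  have hφmem : ∀ b ∈ B, φ b ∈ P ∩ (L : Set E) := by
    intro b hb
    simp only [hφ, dif_pos hb]
    exact (hwit b hb).choose_spec.1
  have hφval : ∀ b (hb : b ∈ B), ∀ i, f i (φ b) = ((b i : ℤ) + ⌈c i⌉ : ℤ) := by
    intro b hb
    simp only [hφ, dif_pos hb]
    exact (hwit b hb).choose_spec.2
  refine ⟨hBfin.toFinset.image φ, ?_, ?_⟩
  · intro x hx
    simp only [Finset.coe_image, Set.mem_image, Finset.mem_coe,
      Set.Finite.mem_toFinset] at hx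
    obtain ⟨b, hb, rfl⟩ := hx
    exact hφmem b hb
  · ext m
    simp only [Set.mem_iUnion, Finset.mem_image, Set.Finite.mem_toFinset,
      Set.mem_image, exists_prop]
    constructor
    · intro hm
      -- the value vector of m
      choose g hg using hval m hm
      have hgA : g ∈ A := ⟨m, hm, hg⟩
      obtain ⟨b, hbB, hble⟩ := hBdom g hgA
      refine ⟨φ b, ⟨b, hbB, rfl⟩, m - φ b, ⟨?_, ?_⟩, by abel⟩
      · rw [hcone]
        intro i
        rw [map_sub, hg i, hφval b hbB i]
        have hbg : (b i : ℝ) ≤ (g i : ℝ) := by exact_mod_cast hble i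
        push_cast
        linarith
      · exact Submodule.sub_mem L hm.2 (hφmem b hbB).2
    · rintro ⟨m₀, ⟨b, hbB, rfl⟩, v, ⟨hvC, hvL⟩, rfl⟩
      have hm₀ := hφmem b hbB
      constructor
      · have : (φ b) + (1 : ℝ) • v ∈ P := by
          rw [← hrec] at hvC
          exact hvC (φ b) hm₀.1 1 zero_le_one
        rwa [one_smul, add_comm] at this
      · exact Submodule.add_mem L hvL hm₀.2
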